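/- The kernel of φ is free abelian of rank 3: there is a group isomorphism from ker φ to ℤ³ sending x₀ = b·a, x₁ = a·b, and x₂ = b⁻¹·a·b² to the three standard basis vectors of ℤ³. -/

import Mathlib

/-- The generator `a` of the free group on two generators. -/
def fa : FreeGroup (Fin 2) := FreeGroup.of 0
/-- The generator `b` of the free group on two generators. -/
def fb : FreeGroup (Fin 2) := FreeGroup.of 1

/-- The two relators `(b·a²)·(a³·b²)⁻¹` and `(b²·a)·(a²·b³)⁻¹`. -/
def csRels : Set (FreeGroup (Fin 2)) :=
  {(fb * fa ^ 2) * (fa ^ 3 * fb ^ 2)⁻¹, (fb ^ 2 * fa) * (fa ^ 2 * fb ^ 3)⁻¹}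

/-- The group `G = ⟨a, b ∣ b·a² = a³·b², b²·a = a²·b³⟩`. -/
abbrev G : Type := PresentedGroup csRels

/-- The image of `a` in `G`. -/
def ga : G := PresentedGroup.of 0
/-- The image of `b` in `G`. -/
def gb : G := PresentedGroup.of 1

set_option maxHeartbeats 1000000

open Multiplicative SemidirectProduct

/-! ### Consequences of the relations in `G` -/

lemma grel1 : gb * ga ^ 2 = ga ^ 3 * gb ^ 2 := by
  have h1 : (PresentedGroup.mk csRels ((fb * fa ^ 2) * (fa ^ 3 * fb ^ 2)⁻¹)) = 1 := by
    apply (QuotientGroup.eq_one_iff _).mpr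
    exact Subgroup.subset_normalClosure (by left; rfl)
  rw [map_mul, map_inv, mul_inv_eq_one] at h1
  simpa [ga, gb, fa, fb, PresentedGroup.of, map_mul, map_pow] using h1

lemma grel2 : gb ^ 2 * ga = ga ^ 2 * gb ^ 3 := by
  have h1 : (PresentedGroup.mk csRels ((fb ^ 2 * fa) * (fa ^ 2 * fb ^ 3)⁻¹)) = 1 := by
    apply (QuotientGroup.eq_one_iff _).mpr
    exact Subgroup.subset_normalClosure (by right; rfl)
  rw [map_mul, map_inv, mul_inv_eq_one] at h1
  simpa [ga, gb, fa, fb, PresentedGroup.of, map_mul, map_pow] using h1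

/-- `y i = b^(-i) · a · b^(i+1)`; these elements lie in the kernel of `φ`. -/
def yy (i : ℤ) : G := gb ^ (-i) * ga * gb ^ (i + 1)

lemma yy_succ (i : ℤ) : yy (i + 1) = gb⁻¹ * yy i * gb := by unfold yy; group

lemma yy_conj (i : ℤ) : gb * yy (i + 1) * gb⁻¹ = yy i := by rw [yy_succ]; group

lemma grel1m : gb * (ga * ga) = ga * (ga * (ga * (gb * gb))) := by
  simpa [pow_succ, mul_assoc] using grel1
lemma grel2m : gb * (gb * ga) = ga * (ga * (gb * (gb * gb))) := by
  simpa [pow_succ, mul_assoc] using grel2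

lemma yy0 : yy 0 = ga * gb := by unfold yy; norm_num
lemma yym1 : yy (-1) = gb * ga := by unfold yy; norm_num
lemma yy1 : yy 1 = gb⁻¹ * (ga * (gb * gb)) := by
  unfold yy
  norm_num; simp [zpow_ofNat, pow_succ, mul_assoc]
lemma yy2 : yy 2 = gb⁻¹ * (gb⁻¹ * (ga * (gb * (gb * gb)))) := by
  unfold yy
  norm_num [zpow_neg, mul_inv_rev]; simp [zpow_ofNat, pow_succ, mul_assoc, mul_inv_rev]
lemma yym2 : yy (-2) = gb * (gb * (ga * gb⁻¹)) := by
  unfold yy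
  norm_num [zpow_neg]; simp [zpow_ofNat, pow_succ, mul_assoc]

lemma hy2 : yy (-2) = yy 0 * yy 1 := by
  rw [← mul_left_inj gb, yym2, yy0, yy1]
  simp only [mul_assoc, inv_mul_cancel_left, inv_mul_cancel, mul_one]
  simpa [mul_assoc] using grel2m

lemma hym1 : yy (-1) = yy 1 * yy 2 := by
  rw [← mul_right_inj gb, yym1, yy1, yy2]
  simp only [mul_assoc, mul_inv_cancel_left, inv_mul_cancel_left, mul_inv_cancel, mul_one]
  simpa [mul_assoc] using grel2m

lemma hR1 : yy (-1) * yy 0 = yy 0 * (yy 1 * yy 2) := by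
  rw [← mul_left_inj gb⁻¹, yym1, yy0, yy1, yy2]
  simp only [mul_assoc, mul_inv_cancel_left, inv_mul_cancel_left, mul_inv_cancel, mul_one]
  simpa [mul_assoc] using grel1m

lemma c_m10 : Commute (yy (-1)) (yy 0) := by
  have : yy (-1) * yy 0 = yy 0 * yy (-1) := by rw [hR1, ← hym1]
  exact this

lemma commute_shift {i j : ℤ} (h : Commute (yy i) (yy j)) :
    Commute (yy (i + 1)) (yy (j + 1)) := by
  rw [yy_succ i, yy_succ j]
  exact h.map (MulAut.conj gb⁻¹).toMonoidHom

lemma c_01 : Commute (yy 0) (yy 1) := by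
  have := commute_shift c_m10; norm_num at this; exact this
lemma c_12 : Commute (yy 1) (yy 2) := by
  have := commute_shift c_01; norm_num at this; exact this
lemma c_m11 : Commute (yy (-1)) (yy 1) := by
  rw [hym1]; exact Commute.mul_left (Commute.refl (yy 1)) c_12.symm

lemma conj_x0 : gb * yy (-1) * gb⁻¹ = yy 0 * yy 1 := by
  have := yy_conj (-2); norm_num at this; rw [this, hy2]
lemma conj_x1 : gb * yy 0 * gb⁻¹ = yy (-1) := by
  have := yy_conj (-1); norm_num at this; exact this
lemma conj_x2 : gb * yy 1 * gb⁻¹ = yy 0 := by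
  have := yy_conj 0; norm_num at this; exact this

/-! ### The model group `ℤ³ ⋊ ℤ` -/

abbrev K : Type := Multiplicative (Fin 3 → ℤ)

def Bfun (n : Fin 3 → ℤ) : Fin 3 → ℤ := ![n 1, n 0 + n 2, n 0]
def Binv (n : Fin 3 → ℤ) : Fin 3 → ℤ := ![n 2, n 0, n 1 - n 2]

def Badd : (Fin 3 → ℤ) ≃+ (Fin 3 → ℤ) where
  toFun := Bfun
  invFun := Binv
  left_inv n := by funext i; fin_cases i <;> simp [Bfun, Binv]
  right_inv n := by funext i; fin_cases i <;> simp [Bfun, Binv]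
  map_add' m n := by funext i; fin_cases i <;> simp [Bfun] <;> ring

def Bmul : MulAut K := AddEquiv.toMultiplicative Badd

def act : Multiplicative ℤ →* MulAut K := zpowersHom _ Bmul

abbrev H : Type := K ⋊[act] Multiplicative ℤ

lemma Bmul_ofAdd (v : Fin 3 → ℤ) : Bmul (ofAdd v) = ofAdd (Bfun v) := rfl
lemma Bmul_symm_ofAdd (v : Fin 3 → ℤ) : Bmul.symm (ofAdd v) = ofAdd (Binv v) := rfl

lemma act_one (v : Fin 3 → ℤ) : act (ofAdd 1) (ofAdd v) = ofAdd (Bfun v) := by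
  show (Bmul ^ (1:ℤ)) (ofAdd v) = _
  rw [zpow_one]; rfl

lemma act_neg_one (v : Fin 3 → ℤ) : act (ofAdd (-1)) (ofAdd v) = ofAdd (Binv v) := by
  show (Bmul ^ (-1:ℤ)) (ofAdd v) = _
  rw [zpow_neg, zpow_one]; rfl

lemma act_two (v : Fin 3 → ℤ) : act (ofAdd 2) (ofAdd v) = ofAdd (Bfun (Bfun v)) := by
  show (Bmul ^ (2:ℤ)) (ofAdd v) = _
  rw [show (2:ℤ) = 1 + 1 by norm_num, zpow_add, zpow_one]; rfl

lemma act_neg_two (v : Fin 3 → ℤ) : act (ofAdd (-2)) (ofAdd v) = ofAdd (Binv (Binv v)) := by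
  show (Bmul ^ (-2:ℤ)) (ofAdd v) = _
  rw [show (-2:ℤ) = -1 + -1 by norm_num, zpow_add, zpow_neg, zpow_one]; rfl

lemma ofAdd_mul_ofAdd (a b : ℤ) : ofAdd a * ofAdd b = ofAdd (a + b) := rfl
lemma ofAdd_inv (a : ℤ) : (ofAdd a)⁻¹ = ofAdd (-a) := rfl

def Ah : H := ⟨ofAdd (Pi.single 1 1), ofAdd (-1)⟩
def Bh : H := ⟨1, ofAdd 1⟩

lemma hrel1 : Bh * Ah ^ 2 = Ah ^ 3 * Bh ^ 2 := by
  apply SemidirectProduct.ext <;>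
    simp only [pow_succ, pow_zero, one_mul, SemidirectProduct.mul_left,
      SemidirectProduct.mul_right, Ah, Bh, map_one, mul_one, one_mul]
  · rw [ofAdd_mul_ofAdd, show (-1 + -1 : ℤ) = -2 from by norm_num,
      act_neg_one, map_mul, act_one, act_one, act_neg_two]
    simp only [← ofAdd_add]
    congr 1
    funext i
    fin_cases i <;> simp [Bfun, Binv, Matrix.vecHead, Matrix.vecTail, Pi.single_apply]
  · simp only [ofAdd_mul_ofAdd, ofAdd_inv]
    norm_num

lemma hrel2 : Bh ^ 2 * Ah = Ah ^ 2 * Bh ^ 3 := by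
  apply SemidirectProduct.ext <;>
    simp only [pow_succ, pow_zero, one_mul, SemidirectProduct.mul_left,
      SemidirectProduct.mul_right, Ah, Bh, map_one, mul_one, one_mul]
  · rw [ofAdd_mul_ofAdd, show (1 + 1 : ℤ) = 2 from by norm_num, act_two, act_neg_one]
    simp only [← ofAdd_add]
    congr 1
    funext i
    fin_cases i <;> simp [Bfun, Binv, Matrix.vecHead, Matrix.vecTail, Pi.single_apply]
  · simp only [ofAdd_mul_ofAdd, ofAdd_inv]
    norm_num

/-! ### Homomorphisms from `K` -/

section
variable {M : Type*} [Group M]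

/-- The homomorphism `K →* M` determined by three pairwise commuting elements. -/
def tripHom (x : Fin 3 → M) (c01 : Commute (x 0) (x 1)) (c02 : Commute (x 0) (x 2))
    (c12 : Commute (x 1) (x 2)) : K →* M where
  toFun n := x 0 ^ (toAdd n 0) * x 1 ^ (toAdd n 1) * x 2 ^ (toAdd n 2)
  map_one' := by simp
  map_mul' m n := by
    simp only [toAdd_mul, Pi.add_apply, zpow_add]
    have hC : Commute (x 2 ^ (toAdd m 2)) (x 0 ^ (toAdd n 0) * x 1 ^ (toAdd n 1)) :=
      ((c02.symm.zpow_zpow _ _).mul_right (c12.symm.zpow_zpow _ _))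
    have hB : Commute (x 1 ^ (toAdd m 1)) (x 0 ^ (toAdd n 0)) := c01.symm.zpow_zpow _ _
    conv_rhs => rw [hC.mul_mul_mul_comm, hB.mul_mul_mul_comm]

lemma tripHom_apply (x : Fin 3 → M) (c01 : Commute (x 0) (x 1)) (c02 : Commute (x 0) (x 2))
    (c12 : Commute (x 1) (x 2)) (v : Fin 3 → ℤ) :
    tripHom x c01 c02 c12 (ofAdd v) = x 0 ^ (v 0) * x 1 ^ (v 1) * x 2 ^ (v 2) := rfl

lemma tripHom_single (x : Fin 3 → M) (c01 : Commute (x 0) (x 1)) (c02 : Commute (x 0) (x 2))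
    (c12 : Commute (x 1) (x 2)) (i : Fin 3) :
    tripHom x c01 c02 c12 (ofAdd (Pi.single i 1)) = x i := by
  unfold tripHom
  simp only [MonoidHom.coe_mk, OneHom.coe_mk, toAdd_ofAdd]
  fin_cases i <;> simp [Pi.single_apply]

lemma K_hom_ext {f g : K →* M}
    (h : ∀ i : Fin 3, f (ofAdd (Pi.single i 1)) = g (ofAdd (Pi.single i 1))) : f = g := by
  have key : ∀ (φ : K →* M) (n : Fin 3 → ℤ),
      φ (ofAdd n) = (φ (ofAdd (Pi.single 0 1))) ^ (n 0) * (φ (ofAdd (Pi.single 1 1))) ^ (n 1) *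
        (φ (ofAdd (Pi.single 2 1))) ^ (n 2) := by
    intro φ n
    have hn : (ofAdd n : K) = ofAdd (Pi.single 0 (n 0)) * ofAdd (Pi.single 1 (n 1)) *
        ofAdd (Pi.single 2 (n 2)) := by
      simp only [← ofAdd_add]
      congr 1
      funext i; fin_cases i <;> simp [Pi.single_apply]
    have hs : ∀ (i : Fin 3) (z : ℤ), (ofAdd (Pi.single i z) : K) = (ofAdd (Pi.single i 1)) ^ z := by
      intro i z
      rw [← ofAdd_zsmul]
      congr 1
      funext j; simp [Pi.single_apply, mul_comm]
    rw [hn, map_mul, map_mul, hs 0 (n 0), hs 1 (n 1), hs 2 (n 2), map_zpow, map_zpow, map_zpow]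
  refine MonoidHom.ext fun n => ?_
  rw [show (n : K) = ofAdd (toAdd n) from rfl, key f, key g, h 0, h 1, h 2]

end

/-! ### The two mutually inverse homomorphisms -/

def fimg : Fin 2 → H := ![Ah, Bh]

lemma relcheck : ∀ r ∈ csRels, FreeGroup.lift fimg r = 1 := by
  intro r hr
  rcases hr with h | h <;> subst h <;>
    simp only [map_mul, map_inv, map_pow, fa, fb, FreeGroup.lift_apply_of, fimg,
      Matrix.cons_val_zero, Matrix.cons_val_one, Matrix.head_cons] <;>
    rw [mul_inv_eq_one]
  · exact hrel1
  · exact hrel2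

def f : G →* H := PresentedGroup.toGroup relcheck

lemma f_a : f ga = Ah := by
  show f (PresentedGroup.of 0) = Ah
  rw [f, PresentedGroup.toGroup.of]; simp [fimg]

lemma f_b : f gb = Bh := by
  show f (PresentedGroup.of 1) = Bh
  rw [f, PresentedGroup.toGroup.of]; simp [fimg]

def X : Fin 3 → G := ![yy (-1), yy 0, yy 1]

lemma cX01 : Commute (X 0) (X 1) := by simpa [X] using c_m10
lemma cX02 : Commute (X 0) (X 2) := by simpa [X] using c_m11
lemma cX12 : Commute (X 1) (X 2) := by simpa [X] using c_01

def f₁ : K →* G := tripHom X cX01 cX02 cX12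

lemma f₁_single (i : Fin 3) : f₁ (ofAdd (Pi.single i 1)) = X i := tripHom_single _ _ _ _ i

lemma base : f₁.comp Bmul.toMonoidHom = (MulAut.conj gb).toMonoidHom.comp f₁ := by
  apply K_hom_ext
  intro i
  simp only [MonoidHom.comp_apply, MulEquiv.coe_toMonoidHom, MulAut.conj_apply,
    Bmul_ofAdd, f₁_single]
  fin_cases i <;>
    · rw [f₁]
      simp only [tripHom_apply]
      simp [Bfun, X, Matrix.vecHead, Matrix.vecTail, Pi.single_apply]
      first
        | rw [← conj_x0]
        | rw [← conj_x1]
        | rw [← conj_x2]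

lemma base_pt (n : K) : f₁ (Bmul n) = gb * f₁ n * gb⁻¹ := by
  have := DFunLike.congr_fun base n
  simpa [MulAut.conj_apply] using this

lemma act_pt (m : ℤ) : ∀ n : K,
    f₁ (act (ofAdd m) n) = gb ^ m * f₁ n * (gb ^ m)⁻¹ := by
  have act1 : ∀ n : K, act (ofAdd 1) n = Bmul n := by
    intro n; show (Bmul ^ (1:ℤ)) n = _; rw [zpow_one]
  have actm1 : ∀ n : K, act (ofAdd (-1)) n = Bmul⁻¹ n := by
    intro n; show (Bmul ^ (-1:ℤ)) n = _; rw [zpow_neg, zpow_one]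
  have basem : ∀ n : K, f₁ (Bmul⁻¹ n) = gb⁻¹ * f₁ n * gb := by
    intro n
    have h := base_pt (Bmul⁻¹ n)
    rw [show Bmul (Bmul⁻¹ n) = n from Bmul.apply_symm_apply n] at h
    rw [h]; group
  induction m using Int.induction_on with
  | zero => simp
  | succ k ih =>
    intro n
    have hsplit : act (ofAdd ((k : ℤ) + 1)) n = act (ofAdd (k : ℤ)) (act (ofAdd 1) n) := by
      rw [ofAdd_add, map_mul]; rfl
    rw [hsplit, act1, ih, base_pt]
    group
  | pred k ih =>
    intro n
    have hsplit : act (ofAdd (-(k : ℤ) - 1)) n = act (ofAdd (-(k : ℤ))) (act (ofAdd (-1)) n) := by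
      rw [sub_eq_add_neg, ofAdd_add, map_mul]; rfl
    rw [hsplit, actm1, ih, basem]
    group

lemma compat : ∀ h : Multiplicative ℤ,
    f₁.comp (act h).toMonoidHom = (MulAut.conj (zpowersHom G gb h)).toMonoidHom.comp f₁ := by
  intro h
  refine MonoidHom.ext fun n => ?_
  simp only [MonoidHom.comp_apply, MulEquiv.coe_toMonoidHom, MulAut.conj_apply, zpowersHom_apply]
  have := act_pt (toAdd h) n
  rwa [ofAdd_toAdd] at this

def g : H →* G := SemidirectProduct.lift f₁ (zpowersHom G gb) compat

lemma gf : g.comp f = MonoidHom.id G := by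
  apply PresentedGroup.ext
  intro x
  fin_cases x
  · show g (f ga) = ga
    rw [f_a, show Ah = inl (ofAdd (Pi.single 1 1)) * inr (ofAdd (-1)) from
      (inl_left_mul_inr_right Ah).symm, map_mul, g, lift_inl, lift_inr, f₁_single,
      zpowersHom_apply]
    simp [X, yy0]
  · show g (f gb) = gb
    rw [f_b, show Bh = inl (1 : K) * inr (ofAdd 1) from (inl_left_mul_inr_right Bh).symm,
      map_mul, g, lift_inl, lift_inr, map_one, zpowersHom_apply]
    simp

lemma fX0 : f (gb * ga) = inl (ofAdd (Pi.single 0 1)) := by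
  rw [map_mul, f_a, f_b]
  apply SemidirectProduct.ext <;>
    simp only [SemidirectProduct.mul_left, SemidirectProduct.mul_right, Ah, Bh, left_inl,
      right_inl, one_mul, map_one, mul_one]
  · rw [act_one]
    congr 1
    funext i
    fin_cases i <;> simp [Bfun, Matrix.vecHead, Matrix.vecTail, Pi.single_apply]
  · rw [ofAdd_mul_ofAdd]; norm_num

lemma fX1 : f (ga * gb) = inl (ofAdd (Pi.single 1 1)) := by
  rw [map_mul, f_a, f_b]
  apply SemidirectProduct.ext <;>
    simp only [SemidirectProduct.mul_left, SemidirectProduct.mul_right, Ah, Bh, left_inl,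
      right_inl, one_mul, map_one, mul_one]
  rw [ofAdd_mul_ofAdd]; norm_num

lemma fX2 : f (gb⁻¹ * ga * gb ^ 2) = inl (ofAdd (Pi.single 2 1)) := by
  rw [map_mul, map_mul, map_inv, map_pow, f_a, f_b]
  apply SemidirectProduct.ext <;>
    simp only [pow_succ, pow_zero, one_mul, SemidirectProduct.mul_left,
      SemidirectProduct.mul_right, SemidirectProduct.inv_left, SemidirectProduct.inv_right,
      Ah, Bh, left_inl, right_inl, map_one, mul_one, one_mul, inv_one]
  · rw [show ((ofAdd 1 : Multiplicative ℤ))⁻¹ = ofAdd (-1) from rfl, act_neg_one]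
    congr 1
    funext i
    fin_cases i <;> simp [Binv, Matrix.vecHead, Matrix.vecTail, Pi.single_apply]
  · simp only [ofAdd_inv, ofAdd_mul_ofAdd]; norm_num

lemma f_comp_f₁ : f.comp f₁ = (inl : K →* H) := by
  apply K_hom_ext
  intro i
  simp only [MonoidHom.comp_apply, f₁_single]
  fin_cases i
  · show f (X 0) = _
    rw [show X 0 = gb * ga by simp [X, yym1]]
    exact fX0
  · show f (X 1) = _
    rw [show X 1 = ga * gb by simp [X, yy0]]
    exact fX1
  · show f (X 2) = _
    rw [show X 2 = gb⁻¹ * ga * gb ^ 2 by simp [X, yy1, pow_succ, mul_assoc]]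
    exact fX2

lemma fginl (n : K) : f (g (inl n)) = inl n := by
  rw [g, lift_inl]
  exact DFunLike.congr_fun f_comp_f₁ n

/-! ### Main theorem -/

/-- For the (unique) homomorphism `φ : G → ℤ` with `φ(a) = −1` and `φ(b) = 1`, the kernel
of `φ` is free abelian of rank 3: there is an isomorphism `ker φ ≅ ℤ³` sending
`x₀ = b·a`, `x₁ = a·b` and `x₂ = b⁻¹·a·b²` to the three standard basis vectors. -/
theorem ker_free_abelian_rank_three
    (φ : G →* Multiplicative ℤ)
    (ha : φ ga = Multiplicative.ofAdd (-1))
    (hb : φ gb = Multiplicative.ofAdd 1) :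
    ∃ ψ : φ.ker ≃* Multiplicative (Fin 3 → ℤ),
      ∀ (h0 : gb * ga ∈ φ.ker) (h1 : ga * gb ∈ φ.ker)
        (h2 : gb⁻¹ * ga * gb ^ 2 ∈ φ.ker),
        ψ ⟨gb * ga, h0⟩ = Multiplicative.ofAdd (Pi.single 0 1) ∧
        ψ ⟨ga * gb, h1⟩ = Multiplicative.ofAdd (Pi.single 1 1) ∧
        ψ ⟨gb⁻¹ * ga * gb ^ 2, h2⟩ = Multiplicative.ofAdd (Pi.single 2 1) := by
  have hφ : φ = SemidirectProduct.rightHom.comp f := by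
    apply PresentedGroup.ext
    intro x
    fin_cases x
    · show φ ga = rightHom (f ga)
      rw [ha, f_a]; rfl
    · show φ gb = rightHom (f gb)
      rw [hb, f_b]; rfl
  have hker : ∀ k : G, k ∈ φ.ker → (f k).right = 1 := by
    intro k hk
    have : φ k = 1 := hk
    rw [hφ] at this
    exact this
  let ψm : φ.ker →* K :=
    { toFun := fun k => (f ↑k).left
      map_one' := by simp
      map_mul' := fun k l => by
        show (f ((↑k : G) * ↑l)).left = (f ↑k).left * (f ↑l).left
        rw [map_mul, SemidirectProduct.mul_left, hker ↑k k.2]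
        simp }
  have hσmem : ∀ n : K, g (inl n) ∈ φ.ker := by
    intro n
    have : φ (g (inl n)) = 1 := by
      rw [hφ, MonoidHom.comp_apply, fginl, rightHom_inl]
    exact this
  let ψ : φ.ker ≃* K :=
    { toFun := ψm
      invFun := fun n => ⟨g (inl n), hσmem n⟩
      left_inv := by
        intro k
        apply Subtype.ext
        show g (inl ((f ↑k).left)) = ↑k
        have h1 : inl ((f ↑k).left) = f ↑k := by
          apply SemidirectProduct.ext
          · rfl
          · rw [right_inl, hker ↑k k.2]
        rw [h1]
        exact DFunLike.congr_fun gf ↑k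
      right_inv := by
        intro n
        show (f (g (inl n))).left = n
        rw [fginl, left_inl]
      map_mul' := ψm.map_mul }
  refine ⟨ψ, fun h0 h1 h2 => ⟨?_, ?_, ?_⟩⟩
  · show (f (gb * ga)).left = ofAdd (Pi.single 0 1)
    rw [fX0, left_inl]
  · show (f (ga * gb)).left = ofAdd (Pi.single 1 1)
    rw [fX1, left_inl]
  · show (f (gb⁻¹ * ga * gb ^ 2)).left = ofAdd (Pi.single 2 1)
    rw [fX2, left_inl]
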